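/- Given a hypergraph H with a disjoint branches decomposition, the incidence graph of H has MIM-width at most 2. -/

import Mathlib

open Finset
open scoped Classical

/-- Rooted binary trees with leaves labelled by `α`; used as (rooted) branch
decompositions. -/
inductive BT (α : Type*) : Type _
  | leaf : α → BT α
  | node : BT α → BT α → BT α

namespace BT

variable {α : Type*}

/-- The list of leaf labels of a tree. -/
def leafList : BT α → List α
  | leaf a => [a]
  | node l r => leafList l ++ leafList r

/-- `t` is a branch decomposition of (all of) `α`: every element of `α`
labels exactly one leaf. -/
def IsDecompOf [Fintype α] (t : BT α) : Prop :=
  t.leafList.Nodup ∧ ∀ a : α, a ∈ t.leafList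

/-- The cuts of a branch decomposition: the leaf sets of all its subtrees. -/
noncomputable def cuts [DecidableEq α] : BT α → Finset (Finset α)
  | leaf a => {{a}}
  | node l r => cuts l ∪ cuts r ∪ {(l.leafList ++ r.leafList).toFinset}

end BT

namespace BT

variable {α : Type*}

lemma leafList_ne_nil (t : BT α) : t.leafList ≠ [] := by
  induction t with
  | leaf a => simp [leafList]
  | node l r ihl ihr => simp [leafList, ihl]

/-- glue a nonempty list of trees into one (right-nested caterpillar). -/
def glue1 : BT α → List (BT α) → BT α
  | b, [] => b
  | b, h :: t => node b (glue1 h t)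

lemma glue1_leafList (b : BT α) (L : List (BT α)) :
    (glue1 b L).leafList = ((b :: L).map leafList).flatten := by
  induction L generalizing b with
  | nil => simp [glue1]
  | cons h t ih => simp [glue1, leafList, ih]

lemma glue1_cuts_sub [DecidableEq α] (b : BT α) (L : List (BT α)) :
    ∀ Y ∈ (glue1 b L).cuts, (∃ s ∈ b :: L, Y ∈ s.cuts) ∨
      (∃ l₂ : List (BT α), l₂.Sublist (b :: L) ∧ Y = ((l₂.map leafList).flatten).toFinset) := by
  induction L generalizing b with
  | nil =>
    intro Y hY
    exact Or.inl ⟨b, by simp, hY⟩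
  | cons h t ih =>
    intro Y hY
    simp only [glue1, cuts, Finset.mem_union, Finset.mem_singleton] at hY
    rcases hY with (hY | hY) | hY
    · exact Or.inl ⟨b, by simp, hY⟩
    · rcases ih h Y hY with ⟨s, hs, hsc⟩ | ⟨l₂, hl₂, hYe⟩
      · exact Or.inl ⟨s, List.mem_cons_of_mem _ hs, hsc⟩
      · exact Or.inr ⟨l₂, hl₂.cons _, hYe⟩
    · refine Or.inr ⟨b :: h :: t, List.Sublist.refl _, ?_⟩
      rw [hY, glue1_leafList]
      simp [leafList]

end BT

/-- The cut graph `G[X, X̄]` has an induced matching of size `m`: `m` edges of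
`G` crossing the cut `(X, X̄)`, pairwise disjoint and with no `G`-edge crossing
the cut between endpoints of two different matching edges. -/
def CrossIndMatching {α : Type*} (G : SimpleGraph α) (X : Finset α) (m : ℕ) : Prop :=
  ∃ f : Fin m → α × α,
    (∀ i, (f i).1 ∈ X ∧ (f i).2 ∉ X ∧ G.Adj (f i).1 (f i).2) ∧
    (∀ i j, i ≠ j →
      (f i).1 ≠ (f j).1 ∧ (f i).2 ≠ (f j).2 ∧ ¬ G.Adj (f i).1 (f j).2)

/-- The size of a maximum induced matching of the cut graph `G[X, X̄]`. -/
noncomputable def cutMim {α : Type*} (G : SimpleGraph α) (X : Finset α) : ℕ :=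
  sSup {m | CrossIndMatching G X m}

/-- The MIM-width of a graph: the minimum over branch decompositions of the
maximum, over all cuts, of the maximum induced matching size of the cut graph. -/
noncomputable def mimw {α : Type*} [Fintype α] [DecidableEq α] (G : SimpleGraph α) : ℕ :=
  sInf {k | ∃ t : BT α, t.IsDecompOf ∧ ∀ X ∈ t.cuts, cutMim G X ≤ k}

variable {V : Type*} [Fintype V] [DecidableEq V]

/-- The incidence graph of a hypergraph: vertices `V ⊕ E`, with `v` adjacent
to `e` iff `v ∈ e`. -/
def incG (E : Finset (Finset V)) : SimpleGraph (V ⊕ {e // e ∈ E}) :=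
  SimpleGraph.fromRel (fun a b =>
    match a, b with
    | Sum.inl v, Sum.inr e => v ∈ e.1
    | _, _ => False)



open Finset SimpleGraph
open scoped Classical
set_option linter.unusedSectionVars false

section TreeAnc

variable {ι : Type*} {T : SimpleGraph ι}

/-- helper: if `z` is in both the take and drop parts of a path, it equals the split point. -/
lemma take_drop_eq {x y w z : ι} [DecidableEq ι] (p : T.Walk x y) (hp : p.IsPath)
    (hw : w ∈ p.support) (h1 : z ∈ (p.takeUntil w hw).support)
    (h2 : z ∈ (p.dropUntil w hw).support) : z = w := by
  by_contra hne
  have hsup : p.support = (p.takeUntil w hw).support ++ (p.dropUntil w hw).support.tail := by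
    conv_lhs => rw [← p.take_spec hw]
    exact SimpleGraph.Walk.support_append _ _
  have hnd := hp.support_nodup
  rw [hsup] at hnd
  have hdisj := List.disjoint_of_nodup_append hnd
  have h2' : z ∈ (p.dropUntil w hw).support.tail := by
    have hc := (p.dropUntil w hw).support_eq_cons
    rw [hc] at h2
    rcases List.mem_cons.mp h2 with h | h
    · exact absurd h hne
    · rw [hc]; simpa using h
  exact hdisj h1 h2'

/-- In any walk, of two support members one lies in the `takeUntil` of the other. -/
lemma mem_takeUntil_or [DecidableEq ι] {x y a b : ι} (p : T.Walk x y)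
    (ha : a ∈ p.support) (hb : b ∈ p.support) :
    a ∈ (p.takeUntil b hb).support ∨ b ∈ (p.takeUntil a ha).support := by
  induction p with
  | nil =>
    rw [SimpleGraph.Walk.mem_support_nil_iff] at ha hb
    subst ha; subst hb
    left; exact SimpleGraph.Walk.start_mem_support _
  | cons h q ih =>
    rename_i u v w
    by_cases hau : a = u
    · subst hau
      left; exact SimpleGraph.Walk.start_mem_support _
    by_cases hbu : b = u
    · subst hbu
      right; exact SimpleGraph.Walk.start_mem_support _
    have ha' : a ∈ q.support := by
      rw [SimpleGraph.Walk.support_cons] at ha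
      rcases List.mem_cons.mp ha with h' | h'
      · exact absurd h' hau
      · exact h'
    have hb' : b ∈ q.support := by
      rw [SimpleGraph.Walk.support_cons] at hb
      rcases List.mem_cons.mp hb with h' | h'
      · exact absurd h' hbu
      · exact h'
    have hta : (SimpleGraph.Walk.cons h q).takeUntil a ha
        = SimpleGraph.Walk.cons h (q.takeUntil a ha') := by
      simp! only
      split_ifs with h'
      · exact absurd h'.symm hau
      · rfl
    have htb : (SimpleGraph.Walk.cons h q).takeUntil b hb
        = SimpleGraph.Walk.cons h (q.takeUntil b hb') := by
      simp! only
      split_ifs with h'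
      · exact absurd h'.symm hbu
      · rfl
    rcases ih ha' hb' with h' | h'
    · left; rw [htb]; exact List.mem_cons_of_mem _ h'
    · right; rw [hta]; exact List.mem_cons_of_mem _ h'

section Anc

variable [DecidableEq ι] (hT : T.IsTree) (r : ι)

/-- The unique path between two vertices of a tree. -/
noncomputable def tpath (a b : ι) : T.Walk a b := (hT.existsUnique_path a b).exists.choose

lemma tpath_isPath (a b : ι) : (tpath hT a b).IsPath :=
  (hT.existsUnique_path a b).exists.choose_spec

lemma tpath_unique {a b : ι} (p : T.Walk a b) (hp : p.IsPath) : p = tpath hT a b :=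
  ((hT.existsUnique_path a b).unique hp (tpath_isPath hT a b))

/-- `Anc hT r a b` : `a` is an ancestor of `b` in the tree rooted at `r`. -/
def Anc (a b : ι) : Prop := a ∈ (tpath hT r b).support

lemma anc_refl (a : ι) : Anc hT r a a := SimpleGraph.Walk.end_mem_support _

lemma anc_root (a : ι) : Anc hT r r a := SimpleGraph.Walk.start_mem_support _

lemma tpath_eq_takeUntil {a b : ι} (h : Anc hT r a b) :
    tpath hT r a = (tpath hT r b).takeUntil a h :=
  (tpath_unique hT _ ((tpath_isPath hT r b).takeUntil h)).symm

lemma anc_trans {a b c : ι} (hab : Anc hT r a b) (hbc : Anc hT r b c) :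
    Anc hT r a c := by
  have : a ∈ (tpath hT r c).support := by
    have h1 : tpath hT r b = (tpath hT r c).takeUntil b hbc := tpath_eq_takeUntil hT r hbc
    have := hab
    rw [Anc, h1] at this
    exact SimpleGraph.Walk.support_takeUntil_subset _ _ this
  exact this

lemma anc_antisymm {a b : ι} (hab : Anc hT r a b) (hba : Anc hT r b a) : a = b := by
  have h1 : tpath hT r b = (tpath hT r a).takeUntil b hba := tpath_eq_takeUntil hT r hba
  have h2 : a ∈ ((tpath hT r a).takeUntil b hba).support := by rw [← h1]; exact hab
  have h3 : a ∈ ((tpath hT r a).dropUntil b hba).support :=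
    SimpleGraph.Walk.end_mem_support _
  exact take_drop_eq _ (tpath_isPath hT r a) hba h2 h3

/-- Two ancestors of a common vertex are comparable. -/
lemma anc_total {a b c : ι} (hac : Anc hT r a c) (hbc : Anc hT r b c) :
    Anc hT r a b ∨ Anc hT r b a := by
  rcases mem_takeUntil_or (tpath hT r c) hac hbc with h | h
  · left; rw [Anc, tpath_eq_takeUntil hT r hbc]; exact h
  · right; rw [Anc, tpath_eq_takeUntil hT r hac]; exact h


/-- If `a ≼ s ≼ b` then there is a path from `a` to `b` through `s`. -/
lemma anc_mem_path {a s b : ι} (has : Anc hT r a s) (hsb : Anc hT r s b) :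
    ∃ p : T.Walk a b, p.IsPath ∧ s ∈ p.support := by
  have hab : Anc hT r a b := anc_trans hT r has hsb
  refine ⟨(tpath hT r b).dropUntil a hab, (tpath_isPath hT r b).dropUntil hab, ?_⟩
  have hs : s ∈ (tpath hT r b).support := hsb
  rw [← (tpath hT r b).take_spec hab, SimpleGraph.Walk.mem_support_append_iff] at hs
  rcases hs with hs | hs
  · have : Anc hT r s a := by rw [Anc, tpath_eq_takeUntil hT r hab]; exact hs
    have : s = a := anc_antisymm hT r this has
    subst this
    exact SimpleGraph.Walk.start_mem_support _
  · exact hs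

/-- `u` is a child of `a`. -/
def Child (a u : ι) : Prop := T.Adj a u ∧ Anc hT r a u

lemma child_step {a b : ι} (hab : Anc hT r a b) (hne : a ≠ b) :
    ∃ u, Child hT r a u ∧ Anc hT r u b := by
  set p := (tpath hT r b).dropUntil a hab with hpdef
  have hnil : ¬ p.Nil := by
    rw [SimpleGraph.Walk.nil_iff_length_eq]
    intro h0
    exact hne (SimpleGraph.Walk.eq_of_length_eq_zero h0)
  set u := p.getVert 1 with hudef
  have hadj : T.Adj a u := p.adj_snd hnil
  have humem : u ∈ p.support := by
    rw [SimpleGraph.Walk.mem_support_iff_exists_getVert]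
    have hl : p.length ≠ 0 := fun h0 => hne (SimpleGraph.Walk.eq_of_length_eq_zero h0)
    exact ⟨1, rfl, by omega⟩
  have hub : Anc hT r u b := (tpath hT r b).support_dropUntil_subset hab humem
  refine ⟨u, ⟨hadj, ?_⟩, hub⟩
  rcases anc_total hT r hab hub with h' | h'
  · exact h'
  · -- Anc u a : then u in take and drop parts, so u = a, contradicting adjacency
    exfalso
    have h1 : u ∈ ((tpath hT r b).takeUntil a hab).support := by
      rw [← tpath_eq_takeUntil hT r hab]; exact h'
    exact hadj.ne' (take_drop_eq _ (tpath_isPath hT r b) hab h1 humem)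

lemma child_anc_eq {a u u' : ι} (hu : Child hT r a u) (hu' : Child hT r a u')
    (huu' : Anc hT r u u') : u = u' := by
  -- the path from a to u' is the single edge
  have hq : (SimpleGraph.Walk.cons hu'.1 SimpleGraph.Walk.nil : T.Walk a u').IsPath := by
    simp [SimpleGraph.Walk.isPath_iff_eq_nil, hu'.1.ne]
  have hqp : (SimpleGraph.Walk.cons hu'.1 SimpleGraph.Walk.nil : T.Walk a u')
      = (tpath hT r u').dropUntil a hu'.2 := by
    rw [tpath_unique hT _ hq,
      tpath_unique hT _ ((tpath_isPath hT r u').dropUntil hu'.2)]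
  have humem : u ∈ (tpath hT r u').support := huu'
  rw [← (tpath hT r u').take_spec hu'.2, SimpleGraph.Walk.mem_support_append_iff] at humem
  rcases humem with h | h
  · exfalso
    have : Anc hT r u a := by rw [Anc, tpath_eq_takeUntil hT r hu'.2]; exact h
    exact hu.1.ne' (anc_antisymm hT r this hu.2)
  · rw [← hqp] at h
    have h2 : u = a ∨ u = u' := by simpa using h
    rcases h2 with h2 | h2
    · exact absurd h2 hu.1.ne'
    · exact h2

lemma child_unique {a u u' s : ι} (hu : Child hT r a u) (hu' : Child hT r a u')
    (hus : Anc hT r u s) (hu's : Anc hT r u' s) : u = u' := by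
  rcases anc_total hT r hus hu's with h | h
  · exact child_anc_eq hT r hu hu' h
  · exact (child_anc_eq hT r hu' hu h).symm

/-- distinct children have disjoint subtrees -/
lemma child_subtree_disj {a u u' s : ι} (hu : Child hT r a u) (hu' : Child hT r a u')
    (hne : u ≠ u') (hus : Anc hT r u s) : ¬ Anc hT r u' s := fun h =>
  hne (child_unique hT r hu hu' hus h)

end Anc

end TreeAnc

section Greatest

variable {ι : Type*} {T : SimpleGraph ι} [DecidableEq ι]

lemma exists_greatest (hT : T.IsTree) (r : ι) (S : Finset ι) :
    (∀ a ∈ S, ∀ b ∈ S, Anc hT r a b ∨ Anc hT r b a) → S.Nonempty →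
    ∃ m ∈ S, ∀ s ∈ S, Anc hT r s m := by
  induction S using Finset.induction_on with
  | empty => intro _ h; simp at h
  | insert a S hnotmem ih =>
    intro hchain _
    rcases S.eq_empty_or_nonempty with rfl | hSne
    · exact ⟨a, by simp, by simp [anc_refl]⟩
    · have hchain' : ∀ x ∈ S, ∀ y ∈ S, Anc hT r x y ∨ Anc hT r y x := fun x hx y hy =>
        hchain x (Finset.mem_insert_of_mem hx) y (Finset.mem_insert_of_mem hy)
      obtain ⟨m, hmS, hm⟩ := ih hchain' hSne
      rcases hchain a (Finset.mem_insert_self a S) m (Finset.mem_insert_of_mem hmS) with h | h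
      · refine ⟨m, Finset.mem_insert_of_mem hmS, ?_⟩
        intro s hs
        rcases Finset.mem_insert.mp hs with rfl | hs
        · exact h
        · exact hm s hs
      · refine ⟨a, Finset.mem_insert_self a S, ?_⟩
        intro s hs
        rcases Finset.mem_insert.mp hs with rfl | hs
        · exact anc_refl hT r s
        · exact anc_trans hT r (hm s hs) h

end Greatest

section Main

variable {V : Type*} [Fintype V] [DecidableEq V] {E : Finset (Finset V)}
  {ι : Type*} {T : SimpleGraph ι} (hT : T.IsTree) (r : ι) (lam : ι → Finset V)

/-- An element of the incidence graph that has at least one neighbour. -/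
def NonIso (lam : ι → Finset V) : V ⊕ {e // e ∈ E} → Prop
  | Sum.inl v => ∃ i, v ∈ lam i
  | Sum.inr e => (e : Finset V).Nonempty

lemma incG_adj {a b : V ⊕ {e // e ∈ E}} :
    (incG E).Adj a b ↔
      (∃ v e, a = Sum.inl v ∧ b = Sum.inr e ∧ v ∈ (e : Finset V)) ∨
      (∃ v e, a = Sum.inr e ∧ b = Sum.inl v ∧ v ∈ (e : Finset V)) := by
  cases a with
  | inl v =>
    cases b with
    | inl w => simp [incG]
    | inr e => simp [incG]
  | inr e =>
    cases b with
    | inl w => simp [incG]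
    | inr e' => simp [incG]

/-- The key combinatorial bound: a "good" cut admits no crossing induced matching
of size `> 2`. -/
lemma cut_bound
    (pos : V ⊕ {e // e ∈ E} → ι)
    (hposv : ∀ v i, v ∈ lam i → v ∈ lam (pos (Sum.inl v)))
    (hposv2 : ∀ v i, v ∈ lam i → Anc hT r i (pos (Sum.inl v)))
    (hpose : ∀ e : {e // e ∈ E}, lam (pos (Sum.inr e)) = e)
    (hbetween : ∀ v a s b, v ∈ lam a → v ∈ lam b → Anc hT r a s → Anc hT r s b → v ∈ lam s)
    (X : Finset (V ⊕ {e // e ∈ E}))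
    (t : ι)
    (hXa : ∀ x ∈ X, NonIso lam x → Anc hT r t (pos x))
    (hXb : ∀ u, Child hT r t u →
      (∀ x, NonIso lam x → Anc hT r u (pos x) → x ∈ X) ∨
      (∀ x ∈ X, NonIso lam x → ¬ Anc hT r u (pos x)))
    {m : ℕ} (hm : CrossIndMatching (incG E) X m) : m ≤ 2 := by
  classical
  by_contra hgt
  push_neg at hgt
  obtain ⟨f, hf1, hf2⟩ := hm
  -- normalize each pair
  -- TypeOf i = true : pair is (inl v, inr e) ; false : (inr e, inl v)
  have hshape : ∀ i : Fin m, ∃ (v : V) (e : {e // e ∈ E}), v ∈ (e : Finset V) ∧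
      ((f i = (Sum.inl v, Sum.inr e)) ∨ (f i = (Sum.inr e, Sum.inl v))) := by
    intro i
    have hadj := (hf1 i).2.2
    rcases incG_adj.mp hadj with ⟨v, e, h1, h2, h3⟩ | ⟨v, e, h1, h2, h3⟩
    · exact ⟨v, e, h3, Or.inl (by rw [← h1, ← h2])⟩
    · exact ⟨v, e, h3, Or.inr (by rw [← h1, ← h2])⟩
  choose vv ee hve hfi using hshape
  -- basic facts
  have hvlam : ∀ i, vv i ∈ lam (pos (Sum.inr (ee i))) := by
    intro i; rw [hpose]; exact hve i
  have hnonisoV : ∀ i, NonIso lam (Sum.inl (vv i) : V ⊕ {e // e ∈ E}) :=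
    fun i => ⟨pos (Sum.inr (ee i)), hvlam i⟩
  have hnonisoE : ∀ i, NonIso lam (Sum.inr (ee i) : V ⊕ {e // e ∈ E}) :=
    fun i => ⟨vv i, hve i⟩
  have hvbot : ∀ i, vv i ∈ lam (pos (Sum.inl (vv i))) :=
    fun i => hposv (vv i) _ (hvlam i)
  have hnb : ∀ i, Anc hT r (pos (Sum.inr (ee i))) (pos (Sum.inl (vv i))) :=
    fun i => hposv2 (vv i) _ (hvlam i)
  -- no witness below t towards n_i
  have hnowit : ∀ i : Fin m, ¬ ∃ w, Child hT r t w ∧ Anc hT r w (pos (Sum.inr (ee i))) := by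
    rintro i ⟨w, hw, hwn⟩
    have hwb : Anc hT r w (pos (Sum.inl (vv i))) := anc_trans hT r hwn (hnb i)
    rcases hXb w hw with hall | hnone
    · -- both endpoints in X, but one is not
      have h1 : (Sum.inl (vv i) : V ⊕ {e // e ∈ E}) ∈ X := hall _ (hnonisoV i) hwb
      have h2 : (Sum.inr (ee i) : V ⊕ {e // e ∈ E}) ∈ X := hall _ (hnonisoE i) hwn
      rcases hfi i with h | h
      · have := (hf1 i).2.1; rw [h] at this; exact this h2
      · have := (hf1 i).2.1; rw [h] at this; exact this h1
    · rcases hfi i with h | h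
      · have hX1 := (hf1 i).1; rw [h] at hX1
        exact hnone _ hX1 (hnonisoV i) hwb
      · have hX1 := (hf1 i).1; rw [h] at hX1
        exact hnone _ hX1 (hnonisoE i) hwn
  -- for type A pairs : Anc n_i t and v_i ∈ lam t
  have htypeA : ∀ i : Fin m, f i = (Sum.inl (vv i), Sum.inr (ee i)) →
      Anc hT r (pos (Sum.inr (ee i))) t ∧ vv i ∈ lam t := by
    intro i h
    have hX1 := (hf1 i).1; rw [h] at hX1
    have htb : Anc hT r t (pos (Sum.inl (vv i))) := hXa _ hX1 (hnonisoV i)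
    have hcomp := anc_total hT r (hnb i) htb
    have hnt : Anc hT r (pos (Sum.inr (ee i))) t := by
      rcases hcomp with h' | h'
      · exact h'
      · -- t ≼ n_i ; if strict, child_step gives a witness, contradiction
        by_cases heq : t = pos (Sum.inr (ee i))
        · rw [heq]; exact anc_refl hT r _
        · obtain ⟨u, hu, hun⟩ := child_step hT r h' heq
          exact absurd ⟨u, hu, hun⟩ (hnowit i)
    refine ⟨hnt, ?_⟩
    exact hbetween (vv i) _ _ _ (hvlam i) (hvbot i) hnt htb
  -- for type B pairs : e_i = lam t
  have htypeB : ∀ i : Fin m, f i = (Sum.inr (ee i), Sum.inl (vv i)) →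
      ((ee i : Finset V) = lam t) := by
    intro i h
    have hX1 := (hf1 i).1; rw [h] at hX1
    have htn : Anc hT r t (pos (Sum.inr (ee i))) := hXa _ hX1 (hnonisoE i)
    have heq : t = pos (Sum.inr (ee i)) := by
      by_contra heq
      obtain ⟨u, hu, hun⟩ := child_step hT r htn heq
      exact absurd ⟨u, hu, hun⟩ (hnowit i)
    rw [heq, hpose]
  -- two type A pairs are impossible
  have h2A : ∀ i j : Fin m, i ≠ j → f i = (Sum.inl (vv i), Sum.inr (ee i)) →
      f j = (Sum.inl (vv j), Sum.inr (ee j)) → False := by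
    intro i j hij hi hj
    obtain ⟨hnti, hvit⟩ := htypeA i hi
    obtain ⟨hntj, hvjt⟩ := htypeA j hj
    rcases anc_total hT r hnti hntj with h' | h'
    · -- n_i ≼ n_j : v_i ∈ lam n_j = e_j, giving a forbidden adjacency
      have hmem : vv i ∈ lam (pos (Sum.inr (ee j))) :=
        hbetween (vv i) _ _ _ (hvlam i) hvit h' hntj
      rw [hpose] at hmem
      have hadj : (incG E).Adj (Sum.inl (vv i)) (Sum.inr (ee j)) :=
        incG_adj.mpr (Or.inl ⟨vv i, ee j, rfl, rfl, hmem⟩)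
      have := (hf2 i j hij).2.2
      rw [hi, hj] at this
      exact this hadj
    · have hmem : vv j ∈ lam (pos (Sum.inr (ee i))) :=
        hbetween (vv j) _ _ _ (hvlam j) hvjt h' hnti
      rw [hpose] at hmem
      have hadj : (incG E).Adj (Sum.inl (vv j)) (Sum.inr (ee i)) :=
        incG_adj.mpr (Or.inl ⟨vv j, ee i, rfl, rfl, hmem⟩)
      have := (hf2 j i hij.symm).2.2
      rw [hi, hj] at this
      exact this hadj
  -- two type B pairs are impossible
  have h2B : ∀ i j : Fin m, i ≠ j → f i = (Sum.inr (ee i), Sum.inl (vv i)) →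
      f j = (Sum.inr (ee j), Sum.inl (vv j)) → False := by
    intro i j hij hi hj
    have h1 := htypeB i hi
    have h2 := htypeB j hj
    have : (ee i : Finset V) = (ee j : Finset V) := by rw [h1, h2]
    have heq : ee i = ee j := Subtype.ext this
    have := (hf2 i j hij).1
    rw [hi, hj] at this
    simp only [Prod.fst] at this
    exact this (by rw [heq])
  -- pigeonhole among three indices
  have h3 : (3 : ℕ) ≤ m := hgt
  set i0 : Fin m := ⟨0, by omega⟩
  set i1 : Fin m := ⟨1, by omega⟩
  set i2 : Fin m := ⟨2, by omega⟩
  have hne01 : i0 ≠ i1 := by simp [i0, i1, Fin.ext_iff]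
  have hne02 : i0 ≠ i2 := by simp [i0, i2, Fin.ext_iff]
  have hne12 : i1 ≠ i2 := by simp [i1, i2, Fin.ext_iff]
  rcases hfi i0 with h0 | h0 <;> rcases hfi i1 with h1 | h1 <;> rcases hfi i2 with h2 | h2
  · exact h2A i0 i1 hne01 h0 h1
  · exact h2A i0 i1 hne01 h0 h1
  · exact h2A i0 i2 hne02 h0 h2
  · exact h2B i1 i2 hne12 h1 h2
  · exact h2A i1 i2 hne12 h1 h2
  · exact h2B i0 i2 hne02 h0 h2
  · exact h2B i0 i1 hne01 h0 h1
  · exact h2B i0 i1 hne01 h0 h1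

end Main


section Build

variable {α : Type*} [Fintype α] [DecidableEq α] {ι : Type*} {T : SimpleGraph ι}
  [Fintype ι] [DecidableEq ι]

/-- Recursive construction of a branch decomposition of the elements positioned in the
subtree below `t`, all of whose cuts are "good". -/
lemma build (hT : T.IsTree) (r : ι) (pos : α → ι) :
    ∀ (n : ℕ) (t : ι),
      (Finset.univ.filter (fun s => Anc hT r t s)).card ≤ n →
      (Finset.univ.filter (fun x : α => Anc hT r t (pos x))).Nonempty →
      ∃ bt : BT α, bt.leafList.Nodup ∧
        bt.leafList.toFinset = Finset.univ.filter (fun x : α => Anc hT r t (pos x)) ∧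
        ∀ Y ∈ bt.cuts, ∃ t' : ι,
          (∀ x ∈ Y, Anc hT r t' (pos x)) ∧
          (∀ u, Child hT r t' u →
            (∀ x : α, Anc hT r u (pos x) → x ∈ Y) ∨ (∀ x ∈ Y, ¬ Anc hT r u (pos x))) := by
  intro n
  induction n with
  | zero =>
    intro t hcard _
    exfalso
    have : t ∈ Finset.univ.filter (fun s => Anc hT r t s) := by
      simp [anc_refl hT r t]
    have := Finset.card_pos.mpr ⟨t, this⟩
    omega
  | succ n IH =>
    intro t hcard hne
    classical
    set SubT : Finset α := Finset.univ.filter (fun x : α => Anc hT r t (pos x)) with hSubT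
    set ElemsT : Finset α := Finset.univ.filter (fun x : α => pos x = t) with hElemsT
    set childF : Finset ι := Finset.univ.filter
      (fun u => Child hT r t u ∧ (Finset.univ.filter (fun x : α => Anc hT r u (pos x))).Nonempty)
      with hchildF
    -- apply the inductive hypothesis to each child with a nonempty subtree
    have hIH : ∀ u : {u // u ∈ childF}, ∃ bt : BT α, bt.leafList.Nodup ∧
        bt.leafList.toFinset = Finset.univ.filter (fun x : α => Anc hT r u.1 (pos x)) ∧
        ∀ Y ∈ bt.cuts, ∃ t' : ι,
          (∀ x ∈ Y, Anc hT r t' (pos x)) ∧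
          (∀ w, Child hT r t' w →
            (∀ x : α, Anc hT r w (pos x) → x ∈ Y) ∨ (∀ x ∈ Y, ¬ Anc hT r w (pos x))) := by
      rintro ⟨u, hu⟩
      rw [hchildF, Finset.mem_filter] at hu
      obtain ⟨-, hchild, hune⟩ := hu
      apply IH u ?_ hune
      -- cardinality decreases
      have hsub : Finset.univ.filter (fun s => Anc hT r u s) ⊆
          (Finset.univ.filter (fun s => Anc hT r t s)).erase t := by
        intro s hs
        rw [Finset.mem_filter] at hs
        rw [Finset.mem_erase, Finset.mem_filter]
        refine ⟨?_, Finset.mem_univ _, anc_trans hT r hchild.2 hs.2⟩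
        rintro rfl
        exact hchild.1.ne (anc_antisymm hT r hchild.2 hs.2)
      have h1 := Finset.card_le_card hsub
      have h2 : ((Finset.univ.filter (fun s => Anc hT r t s)).erase t).card
          = (Finset.univ.filter (fun s => Anc hT r t s)).card - 1 := by
        apply Finset.card_erase_of_mem
        simp [anc_refl hT r t]
      have h3 : t ∈ Finset.univ.filter (fun s => Anc hT r t s) := by
        simp [anc_refl hT r t]
      have h4 := Finset.card_pos.mpr ⟨t, h3⟩
      omega
    choose btOf hN hC hG using hIH
    set elemsL : List (BT α) := ElemsT.toList.map BT.leaf with helemsL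
    set parts0 : List (BT α) := childF.attach.toList.map btOf with hparts0
    set partsAll : List (BT α) := elemsL ++ parts0 with hpartsAll
    -- characterization of membership in partsAll
    have hmemParts : ∀ bt ∈ partsAll,
        (∃ a ∈ ElemsT, bt = BT.leaf a) ∨ (∃ u : {u // u ∈ childF}, bt = btOf u) := by
      intro bt hbt
      rw [hpartsAll, List.mem_append] at hbt
      rcases hbt with hbt | hbt
      · rw [helemsL, List.mem_map] at hbt
        obtain ⟨a, ha, rfl⟩ := hbt
        exact Or.inl ⟨a, Finset.mem_toList.mp ha, rfl⟩
      · rw [hparts0, List.mem_map] at hbt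
        obtain ⟨u, _, rfl⟩ := hbt
        exact Or.inr ⟨u, rfl⟩
    -- reverse membership
    have hleafmem : ∀ a ∈ ElemsT, BT.leaf a ∈ partsAll := by
      intro a ha
      rw [hpartsAll, List.mem_append]
      exact Or.inl (by rw [helemsL, List.mem_map]; exact ⟨a, Finset.mem_toList.mpr ha, rfl⟩)
    have hbtmem : ∀ u : {u // u ∈ childF}, btOf u ∈ partsAll := by
      intro u
      rw [hpartsAll, List.mem_append]
      refine Or.inr ?_
      rw [hparts0, List.mem_map]
      exact ⟨u, by simp [Finset.mem_toList], rfl⟩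
    -- content of each part
    have hpartcontent : ∀ bt ∈ partsAll, ∀ x ∈ bt.leafList, Anc hT r t (pos x) := by
      intro bt hbt x hx
      rcases hmemParts bt hbt with ⟨a, ha, rfl⟩ | ⟨u, rfl⟩
      · simp only [BT.leafList, List.mem_singleton] at hx
        subst hx
        rw [hElemsT, Finset.mem_filter] at ha
        rw [ha.2]
        exact anc_refl hT r t
      · have : x ∈ (btOf u).leafList.toFinset := List.mem_toFinset.mpr hx
        rw [hC u, Finset.mem_filter] at this
        have hu := (Finset.mem_filter.mp u.2).2
        exact anc_trans hT r hu.1.2 this.2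
    -- partsAll is nonempty
    obtain ⟨x₀, hx₀⟩ := hne
    rw [Finset.mem_filter] at hx₀
    have hnonnil : partsAll ≠ [] := by
      by_cases hx0t : pos x₀ = t
      · intro h
        have : BT.leaf x₀ ∈ partsAll :=
          hleafmem x₀ (by rw [hElemsT, Finset.mem_filter]; exact ⟨Finset.mem_univ _, hx0t⟩)
        rw [h] at this
        exact List.not_mem_nil this
      · obtain ⟨u, hu, hux⟩ := child_step hT r hx₀.2 (fun h => hx0t h.symm)
        have huF : u ∈ childF := by
          rw [hchildF, Finset.mem_filter]
          exact ⟨Finset.mem_univ _, hu, ⟨x₀, by rw [Finset.mem_filter]; exact ⟨Finset.mem_univ _, hux⟩⟩⟩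
        intro h
        have := hbtmem ⟨u, huF⟩
        rw [h] at this
        exact List.not_mem_nil this
    obtain ⟨b, L, hbL⟩ := List.exists_cons_of_ne_nil hnonnil
    refine ⟨BT.glue1 b L, ?_, ?_, ?_⟩
    · -- Nodup
      rw [BT.glue1_leafList, ← hbL]
      rw [List.nodup_flatten]
      constructor
      · intro l hl
        rw [List.mem_map] at hl
        obtain ⟨bt, hbt, rfl⟩ := hl
        rcases hmemParts bt hbt with ⟨a, _, rfl⟩ | ⟨u, rfl⟩
        · simp [BT.leafList]
        · exact hN u
      · -- pairwise disjoint
        rw [hpartsAll, List.map_append, List.pairwise_append]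
        refine ⟨?_, ?_, ?_⟩
        · rw [helemsL, List.map_map, List.pairwise_map]
          have := ElemsT.nodup_toList
          refine List.Pairwise.imp ?_ this
          intro a b hab x hxa hxb
          simp only [Function.comp_apply, BT.leafList, List.mem_singleton] at hxa hxb
          exact hab (hxa ▸ hxb ▸ rfl)
        · rw [hparts0, List.map_map, List.pairwise_map]
          have : childF.attach.toList.Nodup := Finset.nodup_toList _
          refine List.Pairwise.imp ?_ this
          intro u u' huu' x hxa hxb
          simp only [Function.comp_apply] at hxa hxb
          have h1 : x ∈ (btOf u).leafList.toFinset := List.mem_toFinset.mpr hxa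
          have h2 : x ∈ (btOf u').leafList.toFinset := List.mem_toFinset.mpr hxb
          rw [hC u, Finset.mem_filter] at h1
          rw [hC u', Finset.mem_filter] at h2
          have hu := (Finset.mem_filter.mp u.2).2
          have hu'2 := (Finset.mem_filter.mp u'.2).2
          exact huu' (Subtype.ext (child_unique hT r hu.1 hu'2.1 h1.2 h2.2))
        · intro l1 hl1 l2 hl2 x hx1 hx2
          rw [helemsL, List.map_map, List.mem_map] at hl1
          rw [hparts0, List.map_map, List.mem_map] at hl2
          obtain ⟨a, ha, rfl⟩ := hl1
          obtain ⟨u, _, rfl⟩ := hl2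
          simp only [Function.comp_apply, BT.leafList, List.mem_singleton] at hx1 hx2
          subst hx1
          have h2 : x ∈ (btOf u).leafList.toFinset := List.mem_toFinset.mpr hx2
          rw [hC u, Finset.mem_filter] at h2
          have ha' := Finset.mem_toList.mp ha
          rw [hElemsT, Finset.mem_filter] at ha'
          have hu := (Finset.mem_filter.mp u.2).2
          have : Anc hT r u.1 t := ha'.2 ▸ h2.2
          exact hu.1.1.ne (anc_antisymm hT r hu.1.2 this)
    · -- content
      rw [BT.glue1_leafList, ← hbL]
      ext x
      rw [List.mem_toFinset, List.mem_flatten]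
      constructor
      · rintro ⟨l, hl, hxl⟩
        rw [List.mem_map] at hl
        obtain ⟨bt, hbt, rfl⟩ := hl
        rw [Finset.mem_filter]
        exact ⟨Finset.mem_univ _, hpartcontent bt hbt x hxl⟩
      · intro hx
        rw [Finset.mem_filter] at hx
        by_cases hxt : pos x = t
        · refine ⟨[x], ?_, by simp⟩
          rw [List.mem_map]
          refine ⟨BT.leaf x, hleafmem x ?_, rfl⟩
          rw [hElemsT, Finset.mem_filter]
          exact ⟨Finset.mem_univ _, hxt⟩
        · obtain ⟨u, hu, hux⟩ := child_step hT r hx.2 (fun h => hxt h.symm)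
          have huF : u ∈ childF := by
            rw [hchildF, Finset.mem_filter]
            exact ⟨Finset.mem_univ _, hu,
              ⟨x, by rw [Finset.mem_filter]; exact ⟨Finset.mem_univ _, hux⟩⟩⟩
          refine ⟨(btOf ⟨u, huF⟩).leafList, ?_, ?_⟩
          · rw [List.mem_map]
            exact ⟨btOf ⟨u, huF⟩, hbtmem ⟨u, huF⟩, rfl⟩
          · rw [← List.mem_toFinset, hC ⟨u, huF⟩, Finset.mem_filter]
            exact ⟨Finset.mem_univ _, hux⟩
    · -- cuts are good
      intro Y hY
      rcases BT.glue1_cuts_sub b L Y hY with ⟨s, hs, hsc⟩ | ⟨l₂, hl₂, hYe⟩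
      · -- a cut of one of the parts
        have hsp : s ∈ partsAll := by rw [hbL]; exact hs
        rcases hmemParts s hsp with ⟨a, _, rfl⟩ | ⟨u, rfl⟩
        · -- leaf cut : Y = {a}
          simp only [BT.cuts, Finset.mem_singleton] at hsc
          subst hsc
          refine ⟨pos a, ?_, ?_⟩
          · intro x hx
            rw [Finset.mem_singleton] at hx
            subst hx
            exact anc_refl hT r _
          · intro w hw
            right
            intro x hx hanc
            rw [Finset.mem_singleton] at hx
            subst hx
            exact hw.1.ne (anc_antisymm hT r hw.2 hanc)
        · exact hG u Y hsc
      · -- a union of complete parts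
        subst hYe
        refine ⟨t, ?_, ?_⟩
        · intro x hx
          rw [List.mem_toFinset, List.mem_flatten] at hx
          obtain ⟨l, hl, hxl⟩ := hx
          rw [List.mem_map] at hl
          obtain ⟨bt, hbt, rfl⟩ := hl
          have : bt ∈ partsAll := by rw [hbL]; exact hl₂.subset hbt
          exact hpartcontent bt this x hxl
        · intro u hu
          by_cases huin : ∃ huF : u ∈ childF, btOf ⟨u, huF⟩ ∈ l₂
          · left
            obtain ⟨huF, hin⟩ := huin
            intro x hanc
            rw [List.mem_toFinset, List.mem_flatten]
            refine ⟨(btOf ⟨u, huF⟩).leafList, ?_, ?_⟩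
            · rw [List.mem_map]; exact ⟨_, hin, rfl⟩
            · rw [← List.mem_toFinset, hC ⟨u, huF⟩, Finset.mem_filter]
              exact ⟨Finset.mem_univ _, hanc⟩
          · right
            intro x hx hanc
            rw [List.mem_toFinset, List.mem_flatten] at hx
            obtain ⟨l, hl, hxl⟩ := hx
            rw [List.mem_map] at hl
            obtain ⟨bt, hbt, rfl⟩ := hl
            have hbtp : bt ∈ partsAll := by rw [hbL]; exact hl₂.subset hbt
            rcases hmemParts bt hbtp with ⟨a, ha, rfl⟩ | ⟨u', rfl⟩
            · simp only [BT.leafList, List.mem_singleton] at hxl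
              subst hxl
              rw [hElemsT, Finset.mem_filter] at ha
              rw [ha.2] at hanc
              exact hu.1.ne (anc_antisymm hT r hu.2 hanc)
            · have h1 : x ∈ (btOf u').leafList.toFinset := List.mem_toFinset.mpr hxl
              rw [hC u', Finset.mem_filter] at h1
              have hu'2 := (Finset.mem_filter.mp u'.2).2
              have : u = u'.1 := child_unique hT r hu hu'2.1 hanc h1.2
              apply huin
              refine ⟨this ▸ u'.2, ?_⟩
              convert hbt using 2
              exact Subtype.ext this
end Build


/-- if the hypergraph `E` has a disjoint branches decomposition
— a rooted join tree `(T, r, lam)` (with the running-intersection property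
along paths) in which edges at vertices lying on different branches are
disjoint — then its incidence graph has MIM-width at most `2`. -/
theorem stmt18 (E : Finset (Finset V))
    {ι : Type*} [Fintype ι] (T : SimpleGraph ι) (r : ι) (lam : ι → Finset V)
    (htree : T.IsTree)
    (hedges : ∀ i, lam i ∈ E)
    (hsurj : ∀ e ∈ E, ∃ i, lam i = e)
    (hconn : ∀ (i j : ι) (p : T.Walk i j), p.IsPath →
      ∀ v, v ∈ lam i → v ∈ lam j → ∀ t ∈ p.support, v ∈ lam t)
    (hdisj : ∀ i j : ι,
      (¬ ∃ p : T.Walk r j, p.IsPath ∧ i ∈ p.support) →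
      (¬ ∃ p : T.Walk r i, p.IsPath ∧ j ∈ p.support) →
      lam i ∩ lam j = ∅) :
    mimw (incG E) ≤ 2 := by
  classical
  -- translate the hypotheses into the ancestry language
  have hcompat : ∀ (v : V) i j, v ∈ lam i → v ∈ lam j →
      Anc htree r i j ∨ Anc htree r j i := by
    intro v i j hi hj
    by_contra h
    push_neg at h
    have h1 : ¬ ∃ p : T.Walk r j, p.IsPath ∧ i ∈ p.support := by
      rintro ⟨p, hp, hip⟩
      exact h.1 (by rw [Anc, ← tpath_unique htree p hp]; exact hip)
    have h2 : ¬ ∃ p : T.Walk r i, p.IsPath ∧ j ∈ p.support := by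
      rintro ⟨p, hp, hjp⟩
      exact h.2 (by rw [Anc, ← tpath_unique htree p hp]; exact hjp)
    have := hdisj i j h1 h2
    have hv : v ∈ lam i ∩ lam j := Finset.mem_inter.mpr ⟨hi, hj⟩
    rw [this] at hv
    exact absurd hv (Finset.notMem_empty v)
  have hbetween : ∀ (v : V) a s b, v ∈ lam a → v ∈ lam b →
      Anc htree r a s → Anc htree r s b → v ∈ lam s := by
    intro v a s b hva hvb has hsb
    obtain ⟨p, hp, hs⟩ := anc_mem_path htree r has hsb
    exact hconn a b p hp v hva hvb s hs
  -- positions of vertices and edges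
  have hvch : ∀ v : V, ∃ p : ι, (∀ i, v ∈ lam i → v ∈ lam p) ∧
      (∀ i, v ∈ lam i → Anc htree r i p) := by
    intro v
    by_cases h : ∃ i, v ∈ lam i
    · have hne : (Finset.univ.filter (fun i => v ∈ lam i)).Nonempty := by
        obtain ⟨i, hi⟩ := h
        exact ⟨i, by simp [hi]⟩
      have hchain : ∀ a ∈ Finset.univ.filter (fun i => v ∈ lam i),
          ∀ b ∈ Finset.univ.filter (fun i => v ∈ lam i),
          Anc htree r a b ∨ Anc htree r b a := by
        intro a ha b hb
        rw [Finset.mem_filter] at ha hb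
        exact hcompat v a b ha.2 hb.2
      obtain ⟨m, hm, hmax⟩ := exists_greatest htree r _ hchain hne
      rw [Finset.mem_filter] at hm
      exact ⟨m, fun i _ => hm.2, fun i hi => hmax i (by simp [hi])⟩
    · exact ⟨r, fun i hi => absurd ⟨i, hi⟩ h, fun i hi => absurd ⟨i, hi⟩ h⟩
  choose posv hposv1 hposv2 using hvch
  have hech : ∀ e : {e // e ∈ E}, ∃ p : ι, lam p = e := fun e => hsurj e.1 e.2
  choose pose hpose1 using hech
  set pos : V ⊕ {e // e ∈ E} → ι := Sum.elim posv pose with hposdef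
  rcases isEmpty_or_nonempty (V ⊕ {e // e ∈ E}) with hemp | hne
  · -- no elements at all : the defining set of `mimw` is empty
    have hset : {k | ∃ t : BT (V ⊕ {e // e ∈ E}), t.IsDecompOf ∧
        ∀ X ∈ t.cuts, cutMim (incG E) X ≤ k} = ∅ := by
      ext k
      simp only [Set.mem_setOf_eq, Set.mem_empty_iff_false, iff_false]
      rintro ⟨bt, _, _⟩
      obtain ⟨a, -⟩ := List.exists_mem_of_ne_nil _ bt.leafList_ne_nil
      exact hemp.false a
    rw [mimw, hset, Nat.sInf_empty]
    omega
  · have hner : (Finset.univ.filter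
        (fun x : V ⊕ {e // e ∈ E} => Anc htree r r (pos x))).Nonempty := by
      obtain ⟨x⟩ := hne
      exact ⟨x, by simp [anc_root htree r]⟩
    obtain ⟨bt, hnd, hcontent, hgood⟩ := build htree r pos
      (Finset.univ.filter (fun s => Anc htree r r s)).card r le_rfl hner
    have hdecomp : bt.IsDecompOf := by
      refine ⟨hnd, fun a => ?_⟩
      have : a ∈ bt.leafList.toFinset := by
        rw [hcontent, Finset.mem_filter]
        exact ⟨Finset.mem_univ _, anc_root htree r _⟩
      exact List.mem_toFinset.mp this
    apply Nat.sInf_le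
    refine ⟨bt, hdecomp, ?_⟩
    intro X hX
    obtain ⟨t', hXa, hXb⟩ := hgood X hX
    have hzero : CrossIndMatching (incG E) X 0 :=
      ⟨fun i => i.elim0, fun i => i.elim0, fun i _ _ => i.elim0⟩
    rw [cutMim]
    apply csSup_le ⟨0, by exact hzero⟩
    intro m hm
    refine cut_bound htree r lam pos ?_ ?_ ?_ hbetween X t' ?_ ?_ hm
    · exact fun v i hi => hposv1 v i hi
    · exact fun v i hi => hposv2 v i hi
    · exact fun e => hpose1 e
    · exact fun x hx _ => hXa x hx
    · intro u hu
      rcases hXb u hu with h | h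
      · exact Or.inl (fun x _ hx => h x hx)
      · exact Or.inr (fun x hx _ => h x hx)
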